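/- Let J be an operator ideal in B(H) such that J² ≠ J. Then the real linear span of D_J^{sa} is a proper subset of J^{sa}: Span_ℝ(D_J^{sa}) ≠ J^{sa}. -/

import Mathlib

open Filter Topology
open scoped InnerProductSpace

noncomputable section

variable {H : Type*} [NormedAddCommGroup H] [InnerProductSpace ℂ H] [CompleteSpace H]

/-- A (two-sided) operator ideal of `B(H)`. -/
def IsOpIdeal (J : Set (H →L[ℂ] H)) : Prop :=
  (0 : H →L[ℂ] H) ∈ J ∧
  (∀ A B : H →L[ℂ] H, A ∈ J → B ∈ J → A + B ∈ J) ∧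
  (∀ A B : H →L[ℂ] H, B ∈ J → A * B ∈ J) ∧
  (∀ A B : H →L[ℂ] H, A ∈ J → A * B ∈ J)

/-- A proper operator ideal: `{0} ≠ J ≠ B(H)`. -/
def IsProperOpIdeal (J : Set (H →L[ℂ] H)) : Prop :=
  IsOpIdeal J ∧ J ≠ {0} ∧ J ≠ Set.univ

/-- Orthogonal (self-adjoint, idempotent) projection. -/
def IsOrthogonalProjection (P : H →L[ℂ] H) : Prop :=
  IsSelfAdjoint P ∧ P * P = P

/-- Diagonal with respect to the fixed orthonormal basis `e`. -/
def IsDiagonalOp (e : HilbertBasis ℕ ℂ H) (A : H →L[ℂ] H) : Prop :=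
  ∀ m n : ℕ, m ≠ n → ⟪A (e m), e n⟫_ℂ = 0

def IsDiagonalProjection (e : HilbertBasis ℕ ℂ H) (P : H →L[ℂ] H) : Prop :=
  IsOrthogonalProjection P ∧ IsDiagonalOp e P

/-- Membership in the restricted unitary group `U_J(H) = U(H) ∩ (I + J)`. -/
def InRestrictedUnitary (J : Set (H →L[ℂ] H)) (U : H →L[ℂ] H) : Prop :=
  U ∈ unitary (H →L[ℂ] H) ∧ U - 1 ∈ J

/-- `A` is `U_J(H)`-diagonalizable with respect to `e`. -/
def RestrictedDiagonalizable (e : HilbertBasis ℕ ℂ H) (J : Set (H →L[ℂ] H))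
    (A : H →L[ℂ] H) : Prop :=
  ∃ U : H →L[ℂ] H, InRestrictedUnitary J U ∧ IsDiagonalOp e (U * A * star U)

/-- Convergence of the partial sums of the series `∑ T n` to `S` in the weak operator
topology. -/
def WOTSum (T : ℕ → H →L[ℂ] H) (S : H →L[ℂ] H) : Prop :=
  ∀ x y : H, Tendsto (fun N : ℕ => ∑ n ∈ Finset.range N, ⟪T n x, y⟫_ℂ)
    atTop (nhds ⟪S x, y⟫_ℂ)

/-- Decomposition of the identity: mutually orthogonal self-adjoint projections summing
to the identity in the strong operator topology. -/
def IsDecompositionOfIdentity (P : ℕ → H →L[ℂ] H) : Prop :=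
  (∀ n, IsOrthogonalProjection (P n)) ∧ (∀ m n, m ≠ n → P m * P n = 0) ∧
  (∀ x : H, HasSum (fun n => P n x) x)

/-- `A` is diagonalizable with infinite point spectrum, distinct eigenvalues `lam` and
spectral projections `P`. -/
def SpectralDataOf (A : H →L[ℂ] H) (lam : ℕ → ℂ) (P : ℕ → H →L[ℂ] H) : Prop :=
  IsDecompositionOfIdentity P ∧ (∀ n, P n ≠ 0) ∧ Function.Injective lam ∧
  (∀ x : H, HasSum (fun n => lam n • P n x) (A x))

/-- Finite rank operator. -/
def IsFiniteRankOp (T : H →L[ℂ] H) : Prop :=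
  FiniteDimensional ℂ (LinearMap.range (T : H →ₗ[ℂ] H))

/-- The `n`-th approximation number (= `(n+1)`-th singular value for compact operators). -/
noncomputable def sNum (T : H →L[ℂ] H) (n : ℕ) : ℝ :=
  sInf {c : ℝ | ∃ F : H →L[ℂ] H, IsFiniteRankOp F ∧
    Module.finrank ℂ (LinearMap.range (F : H →ₗ[ℂ] H)) ≤ n ∧ c = ‖T - F‖}

/-- The arithmetic mean closure `J^{-am}` of an operator ideal. -/
def amClosure (J : Set (H →L[ℂ] H)) : Set (H →L[ℂ] H) :=
  {A | IsCompactOperator ⇑A ∧ ∃ B ∈ J, ∃ M : ℝ, 0 < M ∧ ∀ n : ℕ,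
    (∑ k ∈ Finset.range (n + 1), sNum A k) ≤ M * (∑ k ∈ Finset.range (n + 1), sNum B k)}

/-- `(P, Q)` is a Fredholm pair of projections with essential codimension `[P : Q] = 0`. -/
def EssCodimZero (P Q : H →L[ℂ] H) : Prop :=
  IsClosed (⇑Q '' (LinearMap.range (P : H →ₗ[ℂ] H) : Set H)) ∧
  FiniteDimensional ℂ
    ↥(LinearMap.ker (Q : H →ₗ[ℂ] H) ⊓ LinearMap.range (P : H →ₗ[ℂ] H)) ∧
  FiniteDimensional ℂ
    ↥(LinearMap.range (Q : H →ₗ[ℂ] H) ⊓ LinearMap.ker (P : H →ₗ[ℂ] H)) ∧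
  Module.finrank ℂ
    ↥(LinearMap.ker (Q : H →ₗ[ℂ] H) ⊓ LinearMap.range (P : H →ₗ[ℂ] H)) =
  Module.finrank ℂ
    ↥(LinearMap.range (Q : H →ₗ[ℂ] H) ⊓ LinearMap.ker (P : H →ₗ[ℂ] H))

/-- Hilbert–Schmidt operator. -/
def IsHilbertSchmidt (T : H →L[ℂ] H) : Prop :=
  ∀ b : HilbertBasis ℕ ℂ H, Summable (fun n => ‖T (b n)‖ ^ 2)

/-- Partial isometry: isometric on the orthogonal complement of its kernel. -/
def IsPartialIsometryOp (V : H →L[ℂ] H) : Prop :=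
  ∀ x ∈ (LinearMap.ker (V : H →ₗ[ℂ] H))ᗮ, ‖V x‖ = ‖x‖


/-- The operator ideal `J² = Span{AB : A, B ∈ J}`. -/
def opIdealSq (J : Set (H →L[ℂ] H)) : Set (H →L[ℂ] H) :=
  (Submodule.span ℂ {C : H →L[ℂ] H | ∃ A ∈ J, ∃ B ∈ J, C = A * B} :
    Submodule ℂ (H →L[ℂ] H))

/-- The self-adjoint part of `D_J`:
`D_J^{sa} = { V D V* : D = D* ∈ D ∩ J, V ∈ U_J(H) }`. -/
def restrictedDiagSA (e : HilbertBasis ℕ ℂ H) (J : Set (H →L[ℂ] H)) :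
    Set (H →L[ℂ] H) :=
  {X | ∃ D V : H →L[ℂ] H, IsDiagonalOp e D ∧ D ∈ J ∧ IsSelfAdjoint D ∧
    InRestrictedUnitary J V ∧ X = V * D * star V}

set_option maxHeartbeats 1000000
set_option synthInstance.maxHeartbeats 1000000
set_option linter.unusedSectionVars false

lemma aux_exists_polar (A : H →L[ℂ] H) :
    ∃ U : H →L[ℂ] H, star A = (star U * A) * star U := by
  classical
  set S : H →L[ℂ] H := CFC.sqrt (star A * A) with hSdef
  have hSsa : IsSelfAdjoint S := (CFC.sqrt_nonneg (a := star A * A)).isSelfAdjoint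
  have hS2 : S * S = star A * A := by
    have := CFC.sq_sqrt (star A * A) (star_mul_self_nonneg A)
    simpa [sq] using this
  have hSadj : ContinuousLinearMap.adjoint S = S :=
    ContinuousLinearMap.isSelfAdjoint_iff'.mp hSsa
  have hinner : ∀ x z : H, ⟪S x, S z⟫_ℂ = ⟪A x, A z⟫_ℂ := by
    intro x z
    calc ⟪S x, S z⟫_ℂ = ⟪(ContinuousLinearMap.adjoint S) x, S z⟫_ℂ := by rw [hSadj]
      _ = ⟪x, S (S z)⟫_ℂ := ContinuousLinearMap.adjoint_inner_left S (S z) x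
      _ = ⟪x, (S * S) z⟫_ℂ := rfl
      _ = ⟪x, (ContinuousLinearMap.adjoint A) (A z)⟫_ℂ := by
          rw [hS2, ← ContinuousLinearMap.star_eq_adjoint]; rfl
      _ = ⟪A x, A z⟫_ℂ := ContinuousLinearMap.adjoint_inner_right A x (A z)
  have hkerle : LinearMap.ker (S : H →ₗ[ℂ] H) ≤ LinearMap.ker (A : H →ₗ[ℂ] H) := by
    intro x hx
    rw [LinearMap.mem_ker] at hx ⊢
    have h0 : ⟪A x, A x⟫_ℂ = 0 := by
      rw [← hinner x x]
      simp only [ContinuousLinearMap.coe_coe] at hx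
      rw [hx]; simp
    exact inner_self_eq_zero.mp h0
  set R : Submodule ℂ H := LinearMap.range (S : H →ₗ[ℂ] H) with hRdef
  set g₀ : ↥R →ₗ[ℂ] H :=
    ((LinearMap.ker (S : H →ₗ[ℂ] H)).liftQ (A : H →ₗ[ℂ] H) hkerle) ∘ₗ
      ((S : H →ₗ[ℂ] H).quotKerEquivRange.symm : ↥R →ₗ[ℂ] H ⧸ LinearMap.ker (S : H →ₗ[ℂ] H))
    with hg₀def
  have hg₀ : ∀ (x : H) (h : S x ∈ R), g₀ ⟨S x, h⟩ = A x := by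
    intro x h
    have h1 : (S : H →ₗ[ℂ] H).quotKerEquivRange.symm ⟨S x, h⟩ = Submodule.Quotient.mk x := by
      rw [LinearEquiv.symm_apply_eq]
      apply Subtype.ext
      exact ((S : H →ₗ[ℂ] H).quotKerEquivRange_apply_mk x)
    simp only [hg₀def, LinearMap.coe_comp, Function.comp_apply, LinearEquiv.coe_coe, h1,
      Submodule.liftQ_apply, ContinuousLinearMap.coe_coe]
  have hmemR : ∀ x : H, S x ∈ R := fun x => ⟨x, rfl⟩
  have hnorm : ∀ v : ↥R, ‖g₀ v‖ = ‖v‖ := by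
    rintro ⟨v, x, rfl⟩
    have : ((S : H →ₗ[ℂ] H) x) = S x := rfl
    simp only [this]
    rw [hg₀ x (hmemR x)]
    have h1 : ⟪A x, A x⟫_ℂ = ⟪S x, S x⟫_ℂ := (hinner x x).symm
    have h2 : ‖A x‖ ^ 2 = ‖S x‖ ^ 2 := by
      have ha := inner_self_eq_norm_sq (𝕜 := ℂ) (A x)
      have hb := inner_self_eq_norm_sq (𝕜 := ℂ) (S x)
      have : (‖A x‖ ^ 2 : ℝ) = (‖S x‖ ^ 2 : ℝ) := by
        have := congrArg Complex.re h1
        simpa [← ha, ← hb] using this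
      exact this
    exact (by nlinarith [norm_nonneg (A x), norm_nonneg (S x), h2] : ‖A x‖ = ‖S x‖)
  set g : ↥R →L[ℂ] H := g₀.mkContinuous 1 (fun v => by rw [hnorm v, one_mul]) with hgdef
  set K : Submodule ℂ H := R.topologicalClosure with hKdef
  haveI : CompleteSpace ↥K := R.isClosed_topologicalClosure.completeSpace_coe
  set ι₀ : ↥R →ₗ[ℂ] ↥K := Submodule.inclusion (R.le_topologicalClosure) with hι₀def
  have hι₀norm : ∀ v : ↥R, ‖ι₀ v‖ = ‖v‖ := fun v => rfl
  set ι : ↥R →L[ℂ] ↥K := ι₀.mkContinuous 1 (fun v => by rw [hι₀norm v, one_mul]) with hιdef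
  have hιcoe : ∀ v : ↥R, ((ι v : H)) = (v : H) := fun v => rfl
  have hdense : DenseRange ι := by
    rw [Metric.denseRange_iff]
    intro u r hr
    have hu : (u : H) ∈ closure (R : Set H) := by
      rw [← Submodule.topologicalClosure_coe]
      exact u.2
    rw [Metric.mem_closure_iff] at hu
    obtain ⟨v, hvR, hvd⟩ := hu r hr
    refine ⟨⟨v, hvR⟩, ?_⟩
    rw [Subtype.dist_eq]
    exact hvd
  have hui : IsUniformInducing ι :=
    (AddMonoidHomClass.isometry_of_norm ι (fun v => rfl)).isUniformInducing
  set U₀ : ↥K →L[ℂ] H := g.extend ι with hU₀def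
  set U : H →L[ℂ] H := U₀ ∘L (Submodule.orthogonalProjectionOnto K) with hUdef
  have hKmem : ∀ x : H, S x ∈ K := fun x => R.le_topologicalClosure (hmemR x)
  have hU₀ι : ∀ v : ↥R, U₀ (ι v) = g v := fun v =>
    ContinuousLinearMap.extend_eq g hdense hui v
  have hUS : ∀ x : H, U (S x) = A x := by
    intro x
    have h1 : Submodule.orthogonalProjectionOnto K (S x) = ⟨S x, hKmem x⟩ :=
      Submodule.orthogonalProjectionOnto_mem_subspace_eq_self (⟨S x, hKmem x⟩ : ↥K)
    have h2 : (⟨S x, hKmem x⟩ : ↥K) = ι ⟨S x, hmemR x⟩ := rfl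
    rw [hUdef]
    simp only [ContinuousLinearMap.comp_apply]
    rw [h1, h2, hU₀ι]
    rw [hgdef]
    simpa [LinearMap.mkContinuous_apply] using hg₀ x (hmemR x)
  have hC : ∀ (x : H) (k : ↥K), ⟪A x, U₀ k⟫_ℂ = ⟪S x, (k : H)⟫_ℂ := by
    intro x
    have heq : (fun k : ↥K => ⟪A x, U₀ k⟫_ℂ) = fun k : ↥K => ⟪S x, (k : H)⟫_ℂ := by
      apply hdense.equalizer
      · exact (continuous_const.inner U₀.continuous)
      · exact (continuous_const.inner continuous_subtype_val)
      · funext v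
        obtain ⟨w, z, rfl⟩ := v
        simp only [Function.comp_apply]
        rw [hU₀ι]
        rw [hgdef]
        simp only [LinearMap.mkContinuous_apply]
        have : g₀ ⟨(S : H →ₗ[ℂ] H) z, ⟨z, rfl⟩⟩ = A z := hg₀ z (hmemR z)
        rw [this]
        have hco : ((ι ⟨(S : H →ₗ[ℂ] H) z, ⟨z, rfl⟩⟩ : ↥K) : H) = S z := rfl
        rw [hco]
        exact (hinner x z).symm
    exact fun k => congrFun heq k
  refine ⟨U, ?_⟩
  have hUAS : star U * A = S := by
    ext x
    refine ext_inner_right ℂ ?_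
    intro y
    have h1 : ⟪(star U * A) x, y⟫_ℂ = ⟪A x, U y⟫_ℂ := by
      rw [ContinuousLinearMap.mul_apply, ContinuousLinearMap.star_eq_adjoint]
      exact ContinuousLinearMap.adjoint_inner_left U y (A x)
    rw [h1]
    have h2 : ⟪A x, U y⟫_ℂ = ⟪S x, ((Submodule.orthogonalProjectionOnto K y : ↥K) : H)⟫_ℂ := hC x _
    have h3 : ⟪S x, y - (Submodule.orthogonalProjectionOnto K y : H)⟫_ℂ = 0 := by
      have hw := Submodule.sub_starProjection_mem_orthogonal (K := K) y
      exact hw (S x) (hKmem x)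
    have h4 : ⟪S x, y⟫_ℂ = ⟪S x, ((Submodule.orthogonalProjectionOnto K y : ↥K) : H)⟫_ℂ := by
      have := inner_sub_right (𝕜 := ℂ) (S x) y ((Submodule.orthogonalProjectionOnto K y : ↥K) : H)
      rw [h3] at this
      linear_combination -this
    rw [h2, h4]
  have hAUS : A = U * S := by
    ext x
    exact (hUS x).symm
  calc star A = star (U * S) := by rw [← hAUS]
    _ = star S * star U := by rw [star_mul]
    _ = S * star U := by rw [hSsa.star_eq]
    _ = (star U * A) * star U := by rw [hUAS]

lemma aux_star_mem {J : Set (H →L[ℂ] H)} (hJ : IsOpIdeal J) {A : H →L[ℂ] H}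
    (hA : A ∈ J) : star A ∈ J := by
  obtain ⟨U, hU⟩ := aux_exists_polar A
  rw [hU]
  exact hJ.2.2.2 _ _ (hJ.2.2.1 _ _ hA)

lemma aux_sq_subset {J : Set (H →L[ℂ] H)} (hJ : IsOpIdeal J) : opIdealSq J ⊆ J := by
  intro X hX
  rw [opIdealSq, SetLike.mem_coe] at hX
  induction hX using Submodule.span_induction with
  | mem x hx => obtain ⟨A, hA, B, hB, rfl⟩ := hx; exact hJ.2.2.2 _ _ hA
  | zero => exact hJ.1
  | add x y hx hy hx' hy' => exact hJ.2.1 _ _ hx' hy'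
  | smul c x hx hx' =>
      have h1 : c • x = (c • (1 : H →L[ℂ] H)) * x := by
        rw [smul_mul_assoc, one_mul]
      rw [h1]
      exact hJ.2.2.1 _ _ hx'

lemma aux_sq_mul_left {J : Set (H →L[ℂ] H)} (hJ : IsOpIdeal J) {X : H →L[ℂ] H}
    (hX : X ∈ opIdealSq J) (C : H →L[ℂ] H) : C * X ∈ opIdealSq J := by
  rw [opIdealSq, SetLike.mem_coe] at hX ⊢
  induction hX using Submodule.span_induction with
  | mem x hx =>
      obtain ⟨A, hA, B, hB, rfl⟩ := hx
      exact Submodule.subset_span ⟨C * A, hJ.2.2.1 C A hA, B, hB, by rw [mul_assoc]⟩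
  | zero => rw [mul_zero]; exact Submodule.zero_mem _
  | add x y hx hy hx' hy' => rw [mul_add]; exact Submodule.add_mem _ hx' hy'
  | smul c x hx hx' => rw [mul_smul_comm]; exact Submodule.smul_mem _ _ hx'

lemma aux_sq_mul_right {J : Set (H →L[ℂ] H)} (hJ : IsOpIdeal J) {X : H →L[ℂ] H}
    (hX : X ∈ opIdealSq J) (C : H →L[ℂ] H) : X * C ∈ opIdealSq J := by
  rw [opIdealSq, SetLike.mem_coe] at hX ⊢
  induction hX using Submodule.span_induction with
  | mem x hx =>
      obtain ⟨A, hA, B, hB, rfl⟩ := hx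
      exact Submodule.subset_span ⟨A, hA, B * C, hJ.2.2.2 B C hB, by rw [mul_assoc]⟩
  | zero => rw [zero_mul]; exact Submodule.zero_mem _
  | add x y hx hy hx' hy' => rw [add_mul]; exact Submodule.add_mem _ hx' hy'
  | smul c x hx hx' => rw [smul_mul_assoc]; exact Submodule.smul_mem _ _ hx'

lemma aux_orthKK (e : HilbertBasis ℕ ℂ H) (f g : ℕ → ℕ) (hfg : ∀ m n, f m ≠ g n)
    (u v : H) (hu : u ∈ (Submodule.span ℂ (Set.range fun n => e (f n))).topologicalClosure)
    (hv : v ∈ (Submodule.span ℂ (Set.range fun n => e (g n))).topologicalClosure) :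
    ⟪u, v⟫_ℂ = 0 := by
  set Kf := (Submodule.span ℂ (Set.range fun n => e (f n))).topologicalClosure with hKf
  set Kg := (Submodule.span ℂ (Set.range fun n => e (g n))).topologicalClosure with hKg
  have h1 : Kg ≤ Kfᗮ := by
    apply Submodule.topologicalClosure_minimal
    · rw [Submodule.span_le]
      rintro _ ⟨n, rfl⟩
      rw [SetLike.mem_coe, Submodule.mem_orthogonal]
      intro w hw
      have h2 : Kf ≤ (Submodule.span ℂ {e (g n)})ᗮ := by
        apply Submodule.topologicalClosure_minimal
        · rw [Submodule.span_le]
          rintro _ ⟨m, rfl⟩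
          rw [SetLike.mem_coe, Submodule.mem_orthogonal]
          intro z hz
          rw [Submodule.mem_span_singleton] at hz
          obtain ⟨c, rfl⟩ := hz
          rw [inner_smul_left]
          have h0 : ⟪e (g n), e (f m)⟫_ℂ = 0 := e.orthonormal.2 (fun h => hfg m n h.symm)
          rw [h0, mul_zero]
        · exact Submodule.isClosed_orthogonal _
      have h3 := h2 hw
      rw [Submodule.mem_orthogonal] at h3
      have h4 : ⟪e (g n), w⟫_ℂ = 0 :=
        h3 (e (g n)) (Submodule.mem_span_singleton_self _)
      rw [← inner_conj_symm, h4, map_zero]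
    · exact Submodule.isClosed_orthogonal _
  have h5 := h1 hv
  rw [Submodule.mem_orthogonal] at h5
  exact h5 u hu

lemma aux_diag_apply (e : HilbertBasis ℕ ℂ H) {D : H →L[ℂ] H} (hD : IsDiagonalOp e D)
    (m : ℕ) : D (e m) = ⟪e m, D (e m)⟫_ℂ • e m := by
  classical
  apply e.repr.injective
  apply lp.ext
  funext i
  rw [LinearIsometryEquiv.map_smul]
  rw [e.repr_self]
  by_cases him : i = m
  · subst him
    rw [e.repr_apply_apply]
    simp [lp.single_apply]
  · have h1 : e.repr (D (e m)) i = 0 := by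
      rw [e.repr_apply_apply]
      rw [← inner_conj_symm]
      rw [hD m i (fun h => him h.symm)]
      simp
    rw [h1]
    simp [lp.single_apply, him]

lemma aux_diag_invariant (e : HilbertBasis ℕ ℂ H) {D : H →L[ℂ] H}
    (hD : IsDiagonalOp e D) (f : ℕ → ℕ) {k : H}
    (hk : k ∈ (Submodule.span ℂ (Set.range fun n => e (f n))).topologicalClosure) :
    D k ∈ (Submodule.span ℂ (Set.range fun n => e (f n))).topologicalClosure := by
  set Kf := (Submodule.span ℂ (Set.range fun n => e (f n))).topologicalClosure with hKf
  set N : Submodule ℂ H := Kf.comap (D : H →ₗ[ℂ] H) with hN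
  have hclosed : IsClosed (N : Set H) := by
    have h1 : (N : Set H) = ⇑D ⁻¹' (Kf : Set H) := rfl
    rw [h1]
    exact (Submodule.isClosed_topologicalClosure _).preimage D.continuous
  have hspan : Submodule.span ℂ (Set.range fun n => e (f n)) ≤ N := by
    rw [Submodule.span_le]
    rintro _ ⟨n, rfl⟩
    have h2 : D (e (f n)) ∈ Kf := by
      rw [aux_diag_apply e hD (f n)]
      exact Kf.smul_mem _
        (Submodule.le_topologicalClosure _ (Submodule.subset_span ⟨n, rfl⟩))
    exact h2
  exact Submodule.topologicalClosure_minimal _ hspan hclosed hk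

set_option maxHeartbeats 1000000 in
lemma aux_isometry (e : HilbertBasis ℕ ℂ H) (f : ℕ → ℕ) (hf : Function.Injective f) :
    ∃ V : H →L[ℂ] H, star V * V = 1 ∧
      (∀ x, V x ∈ (Submodule.span ℂ (Set.range fun n => e (f n))).topologicalClosure) ∧
      (∀ k ∈ (Submodule.span ℂ (Set.range fun n => e (f n))).topologicalClosure,
        V ((star V) k) = k) := by
  classical
  set K := (Submodule.span ℂ (Set.range fun n => e (f n))).topologicalClosure with hK
  haveI : CompleteSpace ↥K :=
    (Submodule.span ℂ (Set.range fun n => e (f n))).isClosed_topologicalClosure.completeSpace_coe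
  have hmemK : ∀ n, e (f n) ∈ K := fun n =>
    Submodule.le_topologicalClosure _ (Submodule.subset_span ⟨n, rfl⟩)
  set v : ℕ → ↥K := fun n => ⟨e (f n), hmemK n⟩ with hv
  have hon : Orthonormal ℂ v := by
    constructor
    · intro n
      have : ‖v n‖ = ‖e (f n)‖ := rfl
      rw [this]
      exact e.orthonormal.1 (f n)
    · intro m n hmn
      have h1 : ⟪v m, v n⟫_ℂ = ⟪e (f m), e (f n)⟫_ℂ := rfl
      rw [h1]
      exact e.orthonormal.2 (fun h => hmn (hf h))
  have hsp : ⊤ ≤ (Submodule.span ℂ (Set.range v)).topologicalClosure := by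
    intro u _
    have himg : (((↑) : ↥K → H) '' ((Submodule.span ℂ (Set.range v) : Submodule ℂ ↥K) : Set ↥K))
        = ((Submodule.span ℂ (Set.range fun n => e (f n)) : Submodule ℂ H) : Set H) := by
      have h0 : (((↑) : ↥K → H) '' ((Submodule.span ℂ (Set.range v) : Submodule ℂ ↥K) : Set ↥K))
          = ((Submodule.map K.subtype (Submodule.span ℂ (Set.range v))) : Set H) := by
        rw [Submodule.map_coe, Submodule.coe_subtype]
      rw [h0]
      rw [Submodule.map_span]
      rw [Submodule.coe_subtype, ← Set.range_comp]
      rfl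
    have hu : (u : H) ∈ closure ((Submodule.span ℂ (Set.range fun n => e (f n)) : Set H)) := by
      rw [← Submodule.topologicalClosure_coe]
      exact u.2
    rw [← SetLike.mem_coe, Submodule.topologicalClosure_coe, closure_subtype, himg]
    exact hu
  set b : HilbertBasis ℕ ℂ ↥K := HilbertBasis.mk hon hsp with hb
  set Viso : H ≃ₗᵢ[ℂ] ↥K := e.repr.trans b.repr.symm with hViso
  set V : H →L[ℂ] H := K.subtypeL ∘L Viso.toLinearIsometry.toContinuousLinearMap with hV
  have hVapp : ∀ x, V x = ((Viso x : ↥K) : H) := fun x => rfl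
  have hVinner : ∀ x y, ⟪V x, V y⟫_ℂ = ⟪x, y⟫_ℂ := by
    intro x y
    rw [hVapp, hVapp, ← Submodule.coe_inner]
    exact Viso.inner_map_map x y
  have hVV1 : star V * V = 1 := by
    ext x
    refine ext_inner_right ℂ ?_
    intro y
    have h1 : ⟪(star V * V) x, y⟫_ℂ = ⟪V x, V y⟫_ℂ := by
      rw [ContinuousLinearMap.mul_apply, ContinuousLinearMap.star_eq_adjoint]
      exact ContinuousLinearMap.adjoint_inner_left V y (V x)
    rw [h1, hVinner]
    rfl
  refine ⟨V, hVV1, fun x => by rw [hVapp]; exact (Viso x).2, ?_⟩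
  intro k hk
  set z : H := Viso.symm ⟨k, hk⟩ with hz
  have hVz : V z = k := by
    rw [hVapp, hz, LinearIsometryEquiv.apply_symm_apply]
  have h1 : (star V) (V z) = z := by
    have h2 : (star V * V) z = (1 : H →L[ℂ] H) z := by rw [hVV1]
    simpa [ContinuousLinearMap.mul_apply, ContinuousLinearMap.one_apply] using h2
  rw [← hVz, h1, hVz]

lemma aux_smul_real (r : ℝ) (X : H →L[ℂ] H) : r • X = ((r : ℂ)) • X := by
  rw [← algebraMap_smul ℂ r X]
  rfl

lemma aux_span_decomp (e : HilbertBasis ℕ ℂ H) {J : Set (H →L[ℂ] H)} (hJ : IsOpIdeal J)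
    {T : H →L[ℂ] H} (hT : T ∈ Submodule.span ℝ (restrictedDiagSA e J)) :
    ∃ D S : H →L[ℂ] H, IsDiagonalOp e D ∧ D ∈ J ∧ S ∈ opIdealSq J ∧ T = D + S := by
  induction hT using Submodule.span_induction with
  | mem x hx =>
      obtain ⟨D₀, V₀, hDdiag, hD₀J, _, hV₀, rfl⟩ := hx
      have hK1 : V₀ - 1 ∈ J := hV₀.2
      have hK2 : star V₀ - 1 ∈ J := by
        have hu : star V₀ * V₀ = 1 := (Unitary.mem_iff.mp hV₀.1).1
        have hneg : (1 - V₀) ∈ J := by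
          have := hJ.2.2.1 (-(1 : H →L[ℂ] H)) (V₀ - 1) hK1
          rwa [neg_one_mul, neg_sub] at this
        have h1 : star V₀ * (1 - V₀) = star V₀ - 1 := by
          rw [mul_sub, mul_one, hu]
        rw [← h1]
        exact hJ.2.2.1 _ _ hneg
      refine ⟨D₀, D₀ * (star V₀ - 1) + (V₀ - 1) * (D₀ * star V₀), hDdiag, hD₀J, ?_, ?_⟩
      · apply Submodule.add_mem
        · exact Submodule.subset_span ⟨D₀, hD₀J, star V₀ - 1, hK2, rfl⟩
        · exact Submodule.subset_span ⟨V₀ - 1, hK1, D₀ * star V₀, hJ.2.2.2 _ _ hD₀J, rfl⟩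
      · noncomm_ring
  | zero =>
      exact ⟨0, 0, fun m n _ => by simp, hJ.1, Submodule.zero_mem _, by simp⟩
  | add x y hx hy hx' hy' =>
      obtain ⟨D1, S1, h1, h2, h3, rfl⟩ := hx'
      obtain ⟨D2, S2, h4, h5, h6, rfl⟩ := hy'
      refine ⟨D1 + D2, S1 + S2, ?_, hJ.2.1 _ _ h2 h5, Submodule.add_mem _ h3 h6, by abel⟩
      intro m n hmn
      simp only [ContinuousLinearMap.add_apply, inner_add_left]
      rw [h1 m n hmn, h4 m n hmn, add_zero]
  | smul r x hx hx' =>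
      obtain ⟨D1, S1, h1, h2, h3, rfl⟩ := hx'
      refine ⟨r • D1, r • S1, ?_, ?_, ?_, by rw [smul_add]⟩
      · intro m n hmn
        rw [aux_smul_real]
        simp only [ContinuousLinearMap.smul_apply, inner_smul_left]
        rw [h1 m n hmn, mul_zero]
      · rw [aux_smul_real]
        have := hJ.2.2.1 (((r : ℂ)) • (1 : H →L[ℂ] H)) D1 h2
        rwa [smul_mul_assoc, one_mul] at this
      · rw [opIdealSq, SetLike.mem_coe] at h3 ⊢
        rw [aux_smul_real]
        exact Submodule.smul_mem _ _ h3

/-- Theorem: `Span_ℝ(D_J^{sa}) ≠ J^{sa}` when `J² ≠ J`. -/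
theorem span_restrictedDiagSA_ne_selfAdjointPart
    (e : HilbertBasis ℕ ℂ H) (J : Set (H →L[ℂ] H)) (hJ : IsOpIdeal J)
    (hsq : opIdealSq J ≠ J) :
    (Submodule.span ℝ (restrictedDiagSA e J) : Set (H →L[ℂ] H)) ≠
      {T : H →L[ℂ] H | T ∈ J ∧ IsSelfAdjoint T} := by
  intro h
  have hsub : opIdealSq J ⊆ J := aux_sq_subset hJ
  have hex : ∃ A, A ∈ J ∧ A ∉ opIdealSq J := by
    by_contra hc
    push_neg at hc
    exact hsq (Set.Subset.antisymm hsub (fun A hA => hc A hA))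
  obtain ⟨A, hAJ, hA2⟩ := hex
  obtain ⟨V, hVV1, hVmem, hVfix⟩ := aux_isometry e (fun n => 2 * n) (by intro a b hab; simp only at hab; omega)
  obtain ⟨W, hWW1, hWmem, -⟩ := aux_isometry e (fun n => 2 * n + 1) (by intro a b hab; simp only at hab; omega)
  set B : H →L[ℂ] H := W * A * star V with hBdef
  have hstarA : star A ∈ J := aux_star_mem hJ hAJ
  have hBJ : B ∈ J := hJ.2.2.2 _ _ (hJ.2.2.1 W A hAJ)
  have hsB : star B = V * (star A * star W) := by
    rw [hBdef, star_mul, star_mul, star_star]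
  have hsBJ : star B ∈ J := by
    rw [hsB]
    exact hJ.2.2.1 _ _ (hJ.2.2.2 _ _ hstarA)
  set T : H →L[ℂ] H := B + star B with hTdef
  have hTJ : T ∈ J := hJ.2.1 _ _ hBJ hsBJ
  have hTsa : IsSelfAdjoint T := by
    rw [hTdef]
    simp only [IsSelfAdjoint, star_add, star_star]
    exact add_comm _ _
  have hTmem : T ∈ (Submodule.span ℝ (restrictedDiagSA e J) : Set (H →L[ℂ] H)) := by
    rw [h]
    exact ⟨hTJ, hTsa⟩
  obtain ⟨D, S, hDdiag, hDJ, hS, hTDS⟩ := aux_span_decomp e hJ hTmem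
  set P : H →L[ℂ] H := V * star V with hPdef
  have hQV : (1 - P) * V = 0 := by
    rw [hPdef, sub_mul, one_mul, mul_assoc, hVV1, mul_one, sub_self]
  have hVW0 : star V * W = 0 := by
    ext x
    refine ext_inner_right ℂ ?_
    intro y
    have h1 : ⟪(star V * W) x, y⟫_ℂ = ⟪W x, V y⟫_ℂ := by
      rw [ContinuousLinearMap.mul_apply, ContinuousLinearMap.star_eq_adjoint]
      exact ContinuousLinearMap.adjoint_inner_left V y (W x)
    rw [h1]
    have h0 : ⟪W x, V y⟫_ℂ = 0 :=
      aux_orthKK e (fun n => 2 * n + 1) (fun n => 2 * n) (by intro m n; show 2 * m + 1 ≠ 2 * n; omega) _ _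
        (hWmem x) (hVmem y)
    rw [h0]
    simp
  have hPB : P * B = 0 := by
    have h1 : P * B = V * ((star V * W) * (A * star V)) := by
      rw [hPdef, hBdef]; noncomm_ring
    rw [h1, hVW0, zero_mul, mul_zero]
  have hBP : B * P = B := by
    have h1 : B * P = W * A * ((star V * V) * star V) := by
      rw [hPdef, hBdef]; noncomm_ring
    rw [h1, hVV1, one_mul]
  have hQB : (1 - P) * B = B := by
    rw [sub_mul, one_mul, hPB, sub_zero]
  have hQsB : (1 - P) * star B = 0 := by
    rw [hsB, ← mul_assoc, hQV, zero_mul]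
  have hQTP : (1 - P) * T * P = B := by
    rw [hTdef, mul_add, add_mul, hQB, hQsB, zero_mul, add_zero, hBP]
  have hQDP : (1 - P) * D * P = 0 := by
    have hQDV : (1 - P) * (D * V) = 0 := by
      ext x
      have h1 : D (V x) ∈ (Submodule.span ℂ
          (Set.range fun n => e (2 * n))).topologicalClosure :=
        aux_diag_invariant e hDdiag _ (hVmem x)
      have h2 : V ((star V) (D (V x))) = D (V x) := hVfix _ h1
      simp only [ContinuousLinearMap.mul_apply, ContinuousLinearMap.sub_apply,
        ContinuousLinearMap.one_apply, ContinuousLinearMap.zero_apply, hPdef]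
      rw [h2, sub_self]
    have h3 : (1 - P) * D * P = ((1 - P) * (D * V)) * star V := by
      rw [hPdef]; noncomm_ring
    rw [h3, hQDV, zero_mul]
  have hBsq : B ∈ opIdealSq J := by
    have h1 : (1 - P) * T * P = (1 - P) * D * P + (1 - P) * S * P := by
      rw [hTDS]; noncomm_ring
    have h2 : B = (1 - P) * S * P := by
      rw [← hQTP, h1, hQDP, zero_add]
    rw [h2]
    exact aux_sq_mul_right hJ (aux_sq_mul_left hJ hS (1 - P)) P
  have hst : star W * B * V = A := by
    have h1 : star W * B * V = (star W * W) * (A * (star V * V)) := by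
      rw [hBdef]; noncomm_ring
    rw [h1, hWW1, hVV1, one_mul, mul_one]
  have hA_sq : A ∈ opIdealSq J := by
    rw [← hst]
    exact aux_sq_mul_right hJ (aux_sq_mul_left hJ hBsq (star W)) V
  exact hA2 hA_sq


end
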